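/- Let f, g be densities on ℝ with f strictly MLRP over g, and let L : ℝ → ℝ be strictly positive with ∫ f·L and ∫ g·L finite and positive. Define posterior densities f'(z) = f(z)L(z)/∫fL and g'(z) = g(z)L(z)/∫gL. Then ∫ z f'(z) dz > ∫ z g'(z) dz, assuming the first moments of f' and g' exist. -/

import Mathlib

open MeasureTheory

lemma aux_mean_lt_mean (F G : ℝ → ℝ)
    (hF_pos : ∀ x, 0 < F x) (hG_pos : ∀ x, 0 < G x)
    (hF_int : Integrable F) (hG_int : Integrable G)
    (hF1 : ∫ x, F x = 1) (hG1 : ∫ x, G x = 1)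
    (hr : StrictMono (fun x => F x / G x))
    (hFm : Integrable (fun z => z * F z)) (hGm : Integrable (fun z => z * G z)) :
    ∫ z, z * G z < ∫ z, z * F z := by
  set S : Set ℝ := {z | F z / G z < 1} with hS_def
  -- strictly positive integral helper
  have key : ∀ (h : ℝ → ℝ), (∀ x, 0 ≤ h x) → Integrable h →
      (∃ a b : ℝ, a < b ∧ ∀ x, x ∈ Set.Ioo a b → h x ≠ 0) → 0 < ∫ x, h x := by
    intro h h0 hi ⟨a, b, hab, hsupp⟩
    rw [MeasureTheory.integral_pos_iff_support_of_nonneg h0 hi]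
    have hsub : Set.Ioo a b ⊆ Function.support h := fun x hx => hsupp x hx
    calc (0 : ENNReal) < volume (Set.Ioo a b) := by
          simp [Real.volume_Ioo, hab]
      _ ≤ volume (Function.support h) := measure_mono hsub
  -- Case 1: S = ∅, i.e. F ≥ G everywhere
  by_cases hSne : S.Nonempty
  · by_cases hSbdd : BddAbove S
    · set c := sSup S with hc
      have hlt : ∀ z, z < c → F z < G z := by
        intro z hz
        obtain ⟨s, hs, hzs⟩ := exists_lt_of_lt_csSup hSne hz
        have : F z / G z < F s / G s := hr hzs
        have : F z / G z < 1 := this.trans hs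
        exact (div_lt_one (hG_pos z)).mp this
      have hge : ∀ z, c < z → G z ≤ F z := by
        intro z hz
        have hzS : z ∉ S := fun h => absurd (le_csSup hSbdd h) (not_le.mpr hz)
        have : 1 ≤ F z / G z := not_lt.mp hzS
        exact (one_le_div (hG_pos z)).mp this
      set h : ℝ → ℝ := fun z => (z - c) * (F z - G z) with hh
      have h0 : ∀ z, 0 ≤ h z := by
        intro z
        rcases lt_trichotomy z c with hzc | hzc | hzc
        · exact le_of_lt (mul_pos_of_neg_of_neg (by linarith) (by linarith [hlt z hzc]))
        · simp [hh, hzc]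
        · exact mul_nonneg (by linarith) (by linarith [hge z hzc])
      have i1 : Integrable (fun z => z * F z - z * G z) := hFm.sub hGm
      have i2 : Integrable (fun z => c * F z - c * G z) :=
        (hF_int.const_mul c).sub (hG_int.const_mul c)
      have hi : Integrable h := by
        have : h = fun z => (z * F z - z * G z) - (c * F z - c * G z) := by
          funext z; simp only [hh]; ring
        rw [this]; exact i1.sub i2
      have hpos : 0 < ∫ z, h z := by
        refine key h h0 hi ⟨c - 1, c, by linarith, fun x hx => ?_⟩
        have hx1 : x < c := hx.2
        have := mul_pos_of_neg_of_neg (a := x - c) (b := F x - G x)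
          (by linarith) (by linarith [hlt x hx1])
        exact ne_of_gt this
      have hval : ∫ z, h z = (∫ z, z * F z) - ∫ z, z * G z := by
        have e : ∫ z, h z = ∫ z, ((z * F z - z * G z) - (c * F z - c * G z)) := by
          congr 1; funext z; simp only [hh]; ring
        rw [e, integral_sub i1 i2, integral_sub hFm hGm,
          integral_sub (hF_int.const_mul c) (hG_int.const_mul c),
          integral_const_mul, integral_const_mul, hF1, hG1]
        ring
      linarith [hval ▸ hpos]
    · -- S unbounded above: F < G everywhere, contradiction with equal integrals
      exfalso
      have hall : ∀ z, F z < G z := by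
        intro z
        obtain ⟨s, hs, hzs⟩ := not_bddAbove_iff.mp hSbdd z
        have h1 : F z / G z < F s / G s := hr hzs
        have h2 : F z / G z < 1 := h1.trans hs
        exact (div_lt_one (hG_pos z)).mp h2
      have iGF : Integrable (fun z => G z - F z) := hG_int.sub hF_int
      have hpos : 0 < ∫ z, G z - F z := by
        refine key _ (fun z => by linarith [hall z]) iGF ⟨0, 1, by norm_num, fun x _ => ?_⟩
        have := hall x; intro hc; linarith
      rw [integral_sub hG_int hF_int, hF1, hG1] at hpos
      linarith
  · -- S empty: F ≥ G everywhere, with strict somewhere; contradiction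
    exfalso
    have hall : ∀ z, G z ≤ F z := by
      intro z
      have : z ∉ S := fun h => hSne ⟨z, h⟩
      exact (one_le_div (hG_pos z)).mp (not_lt.mp this)
    have hstrict : ∀ z, 0 < z → G z < F z := by
      intro z hz
      have : F 0 / G 0 < F z / G z := hr hz
      have h1 : 1 ≤ F 0 / G 0 := not_lt.mp (fun h => hSne ⟨0, h⟩)
      exact (one_lt_div (hG_pos z)).mp (lt_of_le_of_lt h1 this)
    have iFG : Integrable (fun z => F z - G z) := hF_int.sub hG_int
    have hpos : 0 < ∫ z, F z - G z := by
      refine key _ (fun z => by linarith [hall z]) iFG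
        ⟨1, 2, by norm_num, fun x hx => ?_⟩
      have := hstrict x (by linarith [hx.1])
      intro hc; linarith
    rw [integral_sub hF_int hG_int, hF1, hG1] at hpos
    linarith


/-- MLRP-dominant prior yields strictly larger posterior mean under a shared
positive likelihood. -/
theorem posterior_mean_mlrp
    (f g L : ℝ → ℝ)
    (hf_pos : ∀ x, 0 < f x) (hg_pos : ∀ x, 0 < g x) (hL_pos : ∀ x, 0 < L x)
    (hf_int : Integrable f) (hg_int : Integrable g)
    (hf_one : ∫ x, f x = 1) (hg_one : ∫ x, g x = 1)
    (hmlrp : StrictMono (fun x => f x / g x))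
    (hfL : Integrable (fun x => f x * L x))
    (hgL : Integrable (fun x => g x * L x))
    (hfL_pos : 0 < ∫ x, f x * L x) (hgL_pos : 0 < ∫ x, g x * L x)
    (hf_mom : Integrable (fun z => z * (f z * L z / ∫ x, f x * L x)))
    (hg_mom : Integrable (fun z => z * (g z * L z / ∫ x, g x * L x))) :
    ∫ z, z * (f z * L z / ∫ x, f x * L x)
      > ∫ z, z * (g z * L z / ∫ x, g x * L x) := by
  set A := ∫ x, f x * L x with hA
  set B := ∫ x, g x * L x with hB
  have hA0 : A ≠ 0 := ne_of_gt hfL_pos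
  have hB0 : B ≠ 0 := ne_of_gt hgL_pos
  refine aux_mean_lt_mean (fun z => f z * L z / A) (fun z => g z * L z / B)
    (fun x => div_pos (mul_pos (hf_pos x) (hL_pos x)) hfL_pos)
    (fun x => div_pos (mul_pos (hg_pos x) (hL_pos x)) hgL_pos)
    (hfL.div_const A) (hgL.div_const B) ?_ ?_ ?_ hf_mom hg_mom
  · rw [integral_div]; exact div_self hA0
  · rw [integral_div]; exact div_self hB0
  · have heq : (fun x => (f x * L x / A) / (g x * L x / B))
        = fun x => f x / g x * (B / A) := by
      funext x
      have hg0 : g x ≠ 0 := ne_of_gt (hg_pos x)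
      have hL0 : L x ≠ 0 := ne_of_gt (hL_pos x)
      field_simp
    rw [heq]
    exact hmlrp.mul_const (div_pos hgL_pos hfL_pos)
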